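/- For every pair of functions e₁ : {-1,1}² → [-1,1] (depending on (x₁,x₃)), e₂ : {-1,1}² → [-1,1] (depending on (x₁,x₂)), e₃ : {-1,1}² → [-1,1] (depending on (x₂,x₃)), the fidelity (1/8) Σ_{x₁,x₂,x₃ ∈ {-1,1}} Q_G(x₁,x₂,x₃) e₁(x₁,x₃) e₂(x₁,x₂) e₃(x₂,x₃) is at most 3/4, where Q_G(x) = 1 - (1-x₁)(1-x₂)(1-x₃)/4. -/

import Mathlib

noncomputable def QG (x₁ x₂ x₃ : ℝ) : ℝ := 1 - (1 - x₁) * (1 - x₂) * (1 - x₃) / 4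

private lemma Lchsh (p q u w : ℝ) (hp : |p| ≤ 1) (hq : |q| ≤ 1) (hu : |u| ≤ 1)
    (hw : |w| ≤ 1) : u * p - u * q + w * p + w * q ≤ 2 := by
  have h1 : u * (p - q) ≤ |p - q| := by
    calc u * (p - q) ≤ |u * (p - q)| := le_abs_self _
      _ = |u| * |p - q| := abs_mul _ _
      _ ≤ 1 * |p - q| := by gcongr
      _ = |p - q| := one_mul _
  have h2 : w * (p + q) ≤ |p + q| := by
    calc w * (p + q) ≤ |w * (p + q)| := le_abs_self _
      _ = |w| * |p + q| := abs_mul _ _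
      _ ≤ 1 * |p + q| := by gcongr
      _ = |p + q| := one_mul _
  have h3 : |p - q| + |p + q| ≤ 2 := by
    rw [abs_le] at hp hq
    rcases abs_cases (p - q) with ⟨e1, _⟩ | ⟨e1, _⟩ <;>
      rcases abs_cases (p + q) with ⟨e2, _⟩ | ⟨e2, _⟩ <;> rw [e1, e2] <;> linarith
  nlinarith [h1, h2, h3]

private lemma Ttriv (p q u : ℝ) (hp : |p| ≤ 1) (hq : |q| ≤ 1) (hu : |u| ≤ 1) :
    p * u + q * u ≤ 2 := by
  have h1 : p * u ≤ 1 := by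
    calc p * u ≤ |p * u| := le_abs_self _
      _ = |p| * |u| := abs_mul _ _
      _ ≤ 1 * 1 := by gcongr
      _ = 1 := one_mul _
  have h2 : q * u ≤ 1 := by
    calc q * u ≤ |q * u| := le_abs_self _
      _ = |q| * |u| := abs_mul _ _
      _ ≤ 1 * 1 := by gcongr
      _ = 1 := one_mul _
  linarith

set_option maxHeartbeats 2000000 in
private lemma key (a1 a2 a3 a4 b1 b2 b3 b4 c1 c2 c3 c4 : ℝ)
    (ha1 : |a1| ≤ 1) (ha2 : |a2| ≤ 1) (ha3 : |a3| ≤ 1) (ha4 : |a4| ≤ 1)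
    (hb1 : |b1| ≤ 1) (hb2 : |b2| ≤ 1) (hb3 : |b3| ≤ 1) (hb4 : |b4| ≤ 1)
    (hc1 : |c1| ≤ 1) (hc2 : |c2| ≤ 1) (hc3 : |c3| ≤ 1) (hc4 : |c4| ≤ 1) :
    -(a1 * b1 * c1) + a2 * b1 * c2 + a1 * b2 * c3 + a2 * b2 * c4 + a3 * b3 * c1
      + a4 * b3 * c2 + a3 * b4 * c3 + a4 * b4 * c4 ≤ 6 := by
  have e1 : (a3 * b3 - a1 * b1) * c1 ≤ |a3 * b3 - a1 * b1| := by
    calc (a3 * b3 - a1 * b1) * c1 ≤ |(a3 * b3 - a1 * b1) * c1| := le_abs_self _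
      _ = |a3 * b3 - a1 * b1| * |c1| := abs_mul _ _
      _ ≤ |a3 * b3 - a1 * b1| * 1 := by gcongr
      _ = _ := mul_one _
  have e2 : (a2 * b1 + a4 * b3) * c2 ≤ |a2 * b1 + a4 * b3| := by
    calc (a2 * b1 + a4 * b3) * c2 ≤ |(a2 * b1 + a4 * b3) * c2| := le_abs_self _
      _ = |a2 * b1 + a4 * b3| * |c2| := abs_mul _ _
      _ ≤ |a2 * b1 + a4 * b3| * 1 := by gcongr
      _ = _ := mul_one _
  have e3 : (a1 * b2 + a3 * b4) * c3 ≤ |a1 * b2 + a3 * b4| := by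
    calc (a1 * b2 + a3 * b4) * c3 ≤ |(a1 * b2 + a3 * b4) * c3| := le_abs_self _
      _ = |a1 * b2 + a3 * b4| * |c3| := abs_mul _ _
      _ ≤ |a1 * b2 + a3 * b4| * 1 := by gcongr
      _ = _ := mul_one _
  have e4 : (a2 * b2 + a4 * b4) * c4 ≤ |a2 * b2 + a4 * b4| := by
    calc (a2 * b2 + a4 * b4) * c4 ≤ |(a2 * b2 + a4 * b4) * c4| := le_abs_self _
      _ = |a2 * b2 + a4 * b4| * |c4| := abs_mul _ _
      _ ≤ |a2 * b2 + a4 * b4| * 1 := by gcongr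
      _ = _ := mul_one _
  have step : -(a1 * b1 * c1) + a2 * b1 * c2 + a1 * b2 * c3 + a2 * b2 * c4 + a3 * b3 * c1
      + a4 * b3 * c2 + a3 * b4 * c3 + a4 * b4 * c4
      ≤ |a3 * b3 - a1 * b1| + |a2 * b1 + a4 * b3| + |a1 * b2 + a3 * b4|
        + |a2 * b2 + a4 * b4| := by nlinarith [e1, e2, e3, e4]
  refine step.trans ?_
  rcases abs_cases (a3 * b3 - a1 * b1) with ⟨g1, _⟩ | ⟨g1, _⟩ <;>
    rcases abs_cases (a2 * b1 + a4 * b3) with ⟨g2, _⟩ | ⟨g2, _⟩ <;>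
    rcases abs_cases (a1 * b2 + a3 * b4) with ⟨g3, _⟩ | ⟨g3, _⟩ <;>
    rcases abs_cases (a2 * b2 + a4 * b4) with ⟨g4, _⟩ | ⟨g4, _⟩ <;>
    rw [g1, g2, g3, g4] <;>
    linarith [Lchsh (a1) (a2) (b1) (b2) ha1 ha2 hb1 hb2,
      Lchsh (a3) (a4) (b3) (b4) ha3 ha4 hb3 hb4,
      Lchsh (a1) (a2) (b1) (-b2) ha1 ha2 hb1 (by rw [abs_neg]; exact hb2),
      Lchsh (a3) (a4) (b3) (-b4) ha3 ha4 hb3 (by rw [abs_neg]; exact hb4),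
      Lchsh (a1) (a2) (-b1) (b2) ha1 ha2 (by rw [abs_neg]; exact hb1) hb2,
      Lchsh (a3) (a4) (-b3) (b4) ha3 ha4 (by rw [abs_neg]; exact hb3) hb4,
      Lchsh (a1) (a2) (-b1) (-b2) ha1 ha2 (by rw [abs_neg]; exact hb1) (by rw [abs_neg]; exact hb2),
      Lchsh (a3) (a4) (-b3) (-b4) ha3 ha4 (by rw [abs_neg]; exact hb3) (by rw [abs_neg]; exact hb4),
      Lchsh (a1) (-a2) (b1) (b2) ha1 (by rw [abs_neg]; exact ha2) hb1 hb2,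
      Lchsh (a3) (-a4) (b3) (b4) ha3 (by rw [abs_neg]; exact ha4) hb3 hb4,
      Lchsh (a1) (-a2) (b1) (-b2) ha1 (by rw [abs_neg]; exact ha2) hb1 (by rw [abs_neg]; exact hb2),
      Lchsh (a3) (-a4) (b3) (-b4) ha3 (by rw [abs_neg]; exact ha4) hb3 (by rw [abs_neg]; exact hb4),
      Lchsh (a1) (-a2) (-b1) (b2) ha1 (by rw [abs_neg]; exact ha2) (by rw [abs_neg]; exact hb1) hb2,
      Lchsh (a3) (-a4) (-b3) (b4) ha3 (by rw [abs_neg]; exact ha4) (by rw [abs_neg]; exact hb3) hb4,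
      Lchsh (a1) (-a2) (-b1) (-b2) ha1 (by rw [abs_neg]; exact ha2) (by rw [abs_neg]; exact hb1) (by rw [abs_neg]; exact hb2),
      Lchsh (a3) (-a4) (-b3) (-b4) ha3 (by rw [abs_neg]; exact ha4) (by rw [abs_neg]; exact hb3) (by rw [abs_neg]; exact hb4),
      Lchsh (-a1) (a2) (b1) (b2) (by rw [abs_neg]; exact ha1) ha2 hb1 hb2,
      Lchsh (-a3) (a4) (b3) (b4) (by rw [abs_neg]; exact ha3) ha4 hb3 hb4,
      Lchsh (-a1) (a2) (b1) (-b2) (by rw [abs_neg]; exact ha1) ha2 hb1 (by rw [abs_neg]; exact hb2),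
      Lchsh (-a3) (a4) (b3) (-b4) (by rw [abs_neg]; exact ha3) ha4 hb3 (by rw [abs_neg]; exact hb4),
      Lchsh (-a1) (a2) (-b1) (b2) (by rw [abs_neg]; exact ha1) ha2 (by rw [abs_neg]; exact hb1) hb2,
      Lchsh (-a3) (a4) (-b3) (b4) (by rw [abs_neg]; exact ha3) ha4 (by rw [abs_neg]; exact hb3) hb4,
      Lchsh (-a1) (a2) (-b1) (-b2) (by rw [abs_neg]; exact ha1) ha2 (by rw [abs_neg]; exact hb1) (by rw [abs_neg]; exact hb2),
      Lchsh (-a3) (a4) (-b3) (-b4) (by rw [abs_neg]; exact ha3) ha4 (by rw [abs_neg]; exact hb3) (by rw [abs_neg]; exact hb4),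
      Lchsh (-a1) (-a2) (b1) (b2) (by rw [abs_neg]; exact ha1) (by rw [abs_neg]; exact ha2) hb1 hb2,
      Lchsh (-a3) (-a4) (b3) (b4) (by rw [abs_neg]; exact ha3) (by rw [abs_neg]; exact ha4) hb3 hb4,
      Lchsh (-a1) (-a2) (b1) (-b2) (by rw [abs_neg]; exact ha1) (by rw [abs_neg]; exact ha2) hb1 (by rw [abs_neg]; exact hb2),
      Lchsh (-a3) (-a4) (b3) (-b4) (by rw [abs_neg]; exact ha3) (by rw [abs_neg]; exact ha4) hb3 (by rw [abs_neg]; exact hb4),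
      Lchsh (-a1) (-a2) (-b1) (b2) (by rw [abs_neg]; exact ha1) (by rw [abs_neg]; exact ha2) (by rw [abs_neg]; exact hb1) hb2,
      Lchsh (-a3) (-a4) (-b3) (b4) (by rw [abs_neg]; exact ha3) (by rw [abs_neg]; exact ha4) (by rw [abs_neg]; exact hb3) hb4,
      Lchsh (-a1) (-a2) (-b1) (-b2) (by rw [abs_neg]; exact ha1) (by rw [abs_neg]; exact ha2) (by rw [abs_neg]; exact hb1) (by rw [abs_neg]; exact hb2),
      Lchsh (-a3) (-a4) (-b3) (-b4) (by rw [abs_neg]; exact ha3) (by rw [abs_neg]; exact ha4) (by rw [abs_neg]; exact hb3) (by rw [abs_neg]; exact hb4),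
      Ttriv (a1) (a2) b1 ha1 ha2 hb1,
      Ttriv (a1) (a2) b2 ha1 ha2 hb2,
      Ttriv (a3) (a4) b3 ha3 ha4 hb3,
      Ttriv (a3) (a4) b4 ha3 ha4 hb4,
      Ttriv (a1) (-a2) b1 ha1 (by rw [abs_neg]; exact ha2) hb1,
      Ttriv (a1) (-a2) b2 ha1 (by rw [abs_neg]; exact ha2) hb2,
      Ttriv (a3) (-a4) b3 ha3 (by rw [abs_neg]; exact ha4) hb3,
      Ttriv (a3) (-a4) b4 ha3 (by rw [abs_neg]; exact ha4) hb4,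
      Ttriv (-a1) (a2) b1 (by rw [abs_neg]; exact ha1) ha2 hb1,
      Ttriv (-a1) (a2) b2 (by rw [abs_neg]; exact ha1) ha2 hb2,
      Ttriv (-a3) (a4) b3 (by rw [abs_neg]; exact ha3) ha4 hb3,
      Ttriv (-a3) (a4) b4 (by rw [abs_neg]; exact ha3) ha4 hb4,
      Ttriv (-a1) (-a2) b1 (by rw [abs_neg]; exact ha1) (by rw [abs_neg]; exact ha2) hb1,
      Ttriv (-a1) (-a2) b2 (by rw [abs_neg]; exact ha1) (by rw [abs_neg]; exact ha2) hb2,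
      Ttriv (-a3) (-a4) b3 (by rw [abs_neg]; exact ha3) (by rw [abs_neg]; exact ha4) hb3,
      Ttriv (-a3) (-a4) b4 (by rw [abs_neg]; exact ha3) (by rw [abs_neg]; exact ha4) hb4]


theorem stmt_16 (e₁ e₂ e₃ : ℝ → ℝ → ℝ)
    (h₁ : ∀ u ∈ ({-1, 1} : Finset ℝ), ∀ v ∈ ({-1, 1} : Finset ℝ), |e₁ u v| ≤ 1)
    (h₂ : ∀ u ∈ ({-1, 1} : Finset ℝ), ∀ v ∈ ({-1, 1} : Finset ℝ), |e₂ u v| ≤ 1)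
    (h₃ : ∀ u ∈ ({-1, 1} : Finset ℝ), ∀ v ∈ ({-1, 1} : Finset ℝ), |e₃ u v| ≤ 1) :
    (1 / 8 : ℝ) * ∑ x₁ ∈ ({-1, 1} : Finset ℝ), ∑ x₂ ∈ ({-1, 1} : Finset ℝ),
        ∑ x₃ ∈ ({-1, 1} : Finset ℝ),
          QG x₁ x₂ x₃ * e₁ x₁ x₃ * e₂ x₁ x₂ * e₃ x₂ x₃ ≤ 3 / 4 := by
  have hm1 : (-1 : ℝ) ∈ ({-1, 1} : Finset ℝ) := by norm_num
  have hp1 : (1 : ℝ) ∈ ({-1, 1} : Finset ℝ) := by norm_num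
  have hkey := key (e₁ (-1) (-1)) (e₁ (-1) 1) (e₁ 1 (-1)) (e₁ 1 1)
    (e₂ (-1) (-1)) (e₂ (-1) 1) (e₂ 1 (-1)) (e₂ 1 1)
    (e₃ (-1) (-1)) (e₃ (-1) 1) (e₃ 1 (-1)) (e₃ 1 1)
    (h₁ _ hm1 _ hm1) (h₁ _ hm1 _ hp1) (h₁ _ hp1 _ hm1) (h₁ _ hp1 _ hp1)
    (h₂ _ hm1 _ hm1) (h₂ _ hm1 _ hp1) (h₂ _ hp1 _ hm1) (h₂ _ hp1 _ hp1)
    (h₃ _ hm1 _ hm1) (h₃ _ hm1 _ hp1) (h₃ _ hp1 _ hm1) (h₃ _ hp1 _ hp1)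
  rw [Finset.sum_pair (by norm_num : (-1 : ℝ) ≠ 1)]
  simp only [Finset.sum_pair (by norm_num : (-1 : ℝ) ≠ 1)]
  unfold QG
  norm_num
  nlinarith [hkey]
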